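/- (Polar/supplementary triangle) If a spherical triangle has sides a, b, c and angles A, B, C, then its polar triangle has sides π − A, π − B, π − C and angles π − a, π − b, π − c. -/

import Mathlib

set_option maxHeartbeats 1000000


open Real
open RealInnerProductSpace

/-- Spherical distance between two points of the unit sphere. -/
noncomputable def sphDist (u v : EuclideanSpace ℝ (Fin 3)) : ℝ :=
  Real.arccos ⟪u, v⟫

/-- The angle of a spherical triangle, determined from its three side lengths
`a` (opposite the angle), `b`, `c` via the spherical law of cosines. -/
noncomputable def angleFromSides (a b c : ℝ) : ℝ :=
  Real.arccos ((Real.cos a - Real.cos b * Real.cos c) / (Real.sin b * Real.sin c))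

lemma li3_iff (P Q R : EuclideanSpace ℝ (Fin 3)) :
    LinearIndependent ℝ ![P, Q, R] ↔
      ∀ a b c : ℝ, a • P + b • Q + c • R = 0 → a = 0 ∧ b = 0 ∧ c = 0 := by
  rw [Fintype.linearIndependent_iff]
  constructor
  · intro h a b c habc
    have := h ![a, b, c] (by simpa [Fin.sum_univ_three] using habc)
    exact ⟨this 0, this 1, this 2⟩
  · intro h g hg i
    have := h (g 0) (g 1) (g 2) (by simpa [Fin.sum_univ_three] using hg)
    fin_cases i
    · exact this.1
    · exact this.2.1
    · exact this.2.2

lemma inner_self_pos' {u : EuclideanSpace ℝ (Fin 3)} (h : u ≠ 0) : 0 < ⟪u, u⟫ := by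
  rw [real_inner_self_eq_norm_sq]
  have : 0 < ‖u‖ := norm_pos_iff.mpr h
  positivity

lemma eq_zero_of_orth3 (P Q R u : EuclideanSpace ℝ (Fin 3))
    (hindep : LinearIndependent ℝ ![P, Q, R])
    (h1 : ⟪u, P⟫ = 0) (h2 : ⟪u, Q⟫ = 0) (h3 : ⟪u, R⟫ = 0) : u = 0 := by
  have hsp : Submodule.span ℝ (Set.range ![P, Q, R]) = ⊤ :=
    hindep.span_eq_top_of_card_eq_finrank (by simp)
  have hu : u ∈ Submodule.span ℝ (Set.range ![P, Q, R]) := hsp ▸ Submodule.mem_top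
  obtain ⟨c, hc⟩ := (Submodule.mem_span_range_iff_exists_fun ℝ).mp hu
  have hc' : c 0 • P + c 1 • Q + c 2 • R = u := by
    rw [← hc, Fin.sum_univ_three]; simp
  have h0 : ⟪u, u⟫ = 0 := by
    nth_rewrite 2 [← hc']
    rw [inner_add_right, inner_add_right, real_inner_smul_right, real_inner_smul_right,
      real_inner_smul_right, h1, h2, h3]
    ring
  exact inner_self_eq_zero.mp h0

lemma key (P Q R Q' R' : EuclideanSpace ℝ (Fin 3))
    (hP : ‖P‖ = 1) (hQ : ‖Q‖ = 1) (hR : ‖R‖ = 1) (hQ'n : ‖Q'‖ = 1) (hR'n : ‖R'‖ = 1)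
    (hindep : LinearIndependent ℝ ![P, Q, R])
    (hQ'P : ⟪Q', P⟫ = 0) (hQ'R : ⟪Q', R⟫ = 0) (hQ'Q : 0 < ⟪Q', Q⟫)
    (hR'P : ⟪R', P⟫ = 0) (hR'Q : ⟪R', Q⟫ = 0) (hR'R : 0 < ⟪R', R⟫) :
    sphDist Q' R' = π - angleFromSides (sphDist Q R) (sphDist P Q) (sphDist P R) := by
  have hind := (li3_iff P Q R).mp hindep
  set x : ℝ := ⟪P, Q⟫ with hxdef
  set y : ℝ := ⟪P, R⟫ with hydef
  set z : ℝ := ⟪Q, R⟫ with hzdef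
  have hPP : ⟪P, P⟫ = 1 := by rw [real_inner_self_eq_norm_sq, hP]; norm_num
  have hQQ : ⟪Q, Q⟫ = 1 := by rw [real_inner_self_eq_norm_sq, hQ]; norm_num
  have hRR : ⟪R, R⟫ = 1 := by rw [real_inner_self_eq_norm_sq, hR]; norm_num
  have hQP : ⟪Q, P⟫ = x := real_inner_comm P Q ▸ rfl
  have hRP : ⟪R, P⟫ = y := real_inner_comm P R ▸ rfl
  have hRQ : ⟪R, Q⟫ = z := real_inner_comm Q R ▸ rfl
  have hx1 : x ^ 2 < 1 := by
    have hne : Q - x • P ≠ 0 := by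
      intro h
      have h0 : x • P + (-1 : ℝ) • Q + (0 : ℝ) • R = 0 := by
        rw [sub_eq_zero] at h; simp [← h]
      have := (hind _ _ _ h0).2.1
      norm_num at this
    have hpos : 0 < ⟪Q - x • P, Q - x • P⟫ := inner_self_pos' hne
    have hexp : ⟪Q - x • P, Q - x • P⟫ = 1 - x ^ 2 := by
      rw [inner_sub_left, inner_sub_right, inner_sub_right, real_inner_smul_left,
        real_inner_smul_left, real_inner_smul_right, real_inner_smul_right, hPP, hQQ, hQP]
      ring
    linarith [hexp ▸ hpos]
  have hy1 : y ^ 2 < 1 := by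
    have hne : R - y • P ≠ 0 := by
      intro h
      have h0 : y • P + (0 : ℝ) • Q + (-1 : ℝ) • R = 0 := by
        rw [sub_eq_zero] at h; simp [← h]
      have := (hind _ _ _ h0).2.2
      norm_num at this
    have hpos : 0 < ⟪R - y • P, R - y • P⟫ := inner_self_pos' hne
    have hexp : ⟪R - y • P, R - y • P⟫ = 1 - y ^ 2 := by
      rw [inner_sub_left, inner_sub_right, inner_sub_right, real_inner_smul_left,
        real_inner_smul_left, real_inner_smul_right, real_inner_smul_right, hPP, hRR, hRP]
      ring
    linarith [hexp ▸ hpos]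
  have hx1' : (0:ℝ) < 1 - x ^ 2 := by linarith
  have hy1' : (0:ℝ) < 1 - y ^ 2 := by linarith
  -- the dual direction w for Q'
  set a : ℝ := (x - z * y) / (1 - y ^ 2) with hadef
  set cc : ℝ := (z - x * y) / (1 - y ^ 2) with hcdef
  set w : EuclideanSpace ℝ (Fin 3) := Q - a • P - cc • R with hwdef
  have hwP : ⟪w, P⟫ = 0 := by
    rw [hwdef, inner_sub_left, inner_sub_left, real_inner_smul_left, real_inner_smul_left,
      hQP, hPP, hRP, hadef, hcdef]
    field_simp
    try ring
  have hwR : ⟪w, R⟫ = 0 := by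
    rw [hwdef, inner_sub_left, inner_sub_left, real_inner_smul_left, real_inner_smul_left,
      hRR, ← hzdef, ← hydef, hadef, hcdef]
    field_simp
    try ring
  have hwQ : ⟪w, Q⟫ = 1 - a * x - cc * z := by
    rw [hwdef, inner_sub_left, inner_sub_left, real_inner_smul_left, real_inner_smul_left,
      hQQ, hRQ, ← hxdef]
    try ring
  set nw : ℝ := 1 - a * x - cc * z with hnwdef
  have hww : ⟪w, w⟫ = nw := by
    nth_rewrite 2 [hwdef]
    rw [inner_sub_right, inner_sub_right, real_inner_smul_right, real_inner_smul_right,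
      hwP, hwR, hwQ]
    ring
  have hwne : w ≠ 0 := by
    intro h
    have h0 : a • P + (-1 : ℝ) • Q + cc • R = 0 := by
      have : a • P + (-1 : ℝ) • Q + cc • R = -(Q - a • P - cc • R) := by module
      rw [this, ← hwdef, h, neg_zero]
    have := (hind _ _ _ h0).2.1
    norm_num at this
  have hnw : 0 < nw := hww ▸ inner_self_pos' hwne
  -- Q' in terms of w
  set t : ℝ := ⟪Q', Q⟫ with htdef
  have hQ'w : Q' = (t / nw) • w := by
    have h0 : Q' - (t / nw) • w = 0 := by
      apply eq_zero_of_orth3 P Q R _ hindep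
      · rw [inner_sub_left, real_inner_smul_left, hQ'P, hwP]; ring
      · rw [inner_sub_left, real_inner_smul_left, hwQ, ← htdef]
        field_simp; ring
      · rw [inner_sub_left, real_inner_smul_left, hQ'R, hwR]; ring
    have := sub_eq_zero.mp h0
    exact this
  have ht2 : t ^ 2 = nw := by
    have h1 : ⟪Q', Q'⟫ = 1 := by rw [real_inner_self_eq_norm_sq, hQ'n]; norm_num
    rw [hQ'w, real_inner_smul_left, real_inner_smul_right, hww] at h1
    have hnw' : nw ≠ 0 := ne_of_gt hnw
    field_simp at h1
    linear_combination h1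
  have ht : t = Real.sqrt nw := by rw [← ht2, Real.sqrt_sq hQ'Q.le]
  -- the dual direction v for R'
  set a' : ℝ := (y - z * x) / (1 - x ^ 2) with ha'def
  set b' : ℝ := (z - x * y) / (1 - x ^ 2) with hb'def
  set v : EuclideanSpace ℝ (Fin 3) := R - a' • P - b' • Q with hvdef
  have hvP : ⟪v, P⟫ = 0 := by
    rw [hvdef, inner_sub_left, inner_sub_left, real_inner_smul_left, real_inner_smul_left,
      hRP, hPP, hQP, ha'def, hb'def]
    field_simp
    try ring
  have hvQ : ⟪v, Q⟫ = 0 := by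
    rw [hvdef, inner_sub_left, inner_sub_left, real_inner_smul_left, real_inner_smul_left,
      hRQ, hQQ, ← hxdef, ha'def, hb'def]
    field_simp
    try ring
  have hvR : ⟪v, R⟫ = 1 - a' * y - b' * z := by
    rw [hvdef, inner_sub_left, inner_sub_left, real_inner_smul_left, real_inner_smul_left,
      hRR, ← hydef, ← hzdef]
    try ring
  set nv : ℝ := 1 - a' * y - b' * z with hnvdef
  have hvv : ⟪v, v⟫ = nv := by
    nth_rewrite 2 [hvdef]
    rw [inner_sub_right, inner_sub_right, real_inner_smul_right, real_inner_smul_right,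
      hvP, hvQ, hvR]
    ring
  have hvne : v ≠ 0 := by
    intro h
    have h0 : a' • P + b' • Q + (-1 : ℝ) • R = 0 := by
      have : a' • P + b' • Q + (-1 : ℝ) • R = -(R - a' • P - b' • Q) := by module
      rw [this, ← hvdef, h, neg_zero]
    have := (hind _ _ _ h0).2.2
    norm_num at this
  have hnv : 0 < nv := hvv ▸ inner_self_pos' hvne
  set s : ℝ := ⟪R', R⟫ with hsdef
  have hR'v : R' = (s / nv) • v := by
    have h0 : R' - (s / nv) • v = 0 := by
      apply eq_zero_of_orth3 P Q R _ hindep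
      · rw [inner_sub_left, real_inner_smul_left, hR'P, hvP]; ring
      · rw [inner_sub_left, real_inner_smul_left, hR'Q, hvQ]; ring
      · rw [inner_sub_left, real_inner_smul_left, hvR, ← hsdef]
        field_simp; ring
    exact sub_eq_zero.mp h0
  have hs2 : s ^ 2 = nv := by
    have h1 : ⟪R', R'⟫ = 1 := by rw [real_inner_self_eq_norm_sq, hR'n]; norm_num
    rw [hR'v, real_inner_smul_left, real_inner_smul_right, hvv] at h1
    have hnv' : nv ≠ 0 := ne_of_gt hnv
    field_simp at h1
    linear_combination h1
  have hs : s = Real.sqrt nv := by rw [← hs2, Real.sqrt_sq hR'R.le]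
  -- inner product of Q' and R'
  have hwv : ⟪w, v⟫ = -b' * nw := by
    rw [hvdef, inner_sub_right, inner_sub_right, real_inner_smul_right, real_inner_smul_right,
      hwR, hwP, hwQ]
    ring
  have hQ'R' : ⟪Q', R'⟫ = (t / nw) * ((s / nv) * ⟪w, v⟫) := by
    rw [hQ'w, hR'v, real_inner_smul_left, real_inner_smul_right]
  set D : ℝ := 1 - x ^ 2 - y ^ 2 - z ^ 2 + 2 * x * y * z with hDdef
  have hnwD : nw = D / (1 - y ^ 2) := by
    rw [hnwdef, hadef, hcdef, hDdef]; field_simp; ring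
  have hnvD : nv = D / (1 - x ^ 2) := by
    rw [hnvdef, ha'def, hb'def, hDdef]; field_simp; ring
  have hD : 0 < D := by
    have h := hnw
    rw [hnwD] at h
    rcases div_pos_iff.mp h with ⟨h1, _⟩ | ⟨_, h2⟩
    · exact h1
    · linarith
  set sx : ℝ := Real.sqrt (1 - x ^ 2) with hsxdef
  set sy : ℝ := Real.sqrt (1 - y ^ 2) with hsydef
  set sD : ℝ := Real.sqrt D with hsDdef
  have hsx : 0 < sx := Real.sqrt_pos.mpr hx1'
  have hsy : 0 < sy := Real.sqrt_pos.mpr hy1'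
  have hsD : 0 < sD := Real.sqrt_pos.mpr hD
  have hsx2 : sx ^ 2 = 1 - x ^ 2 := Real.sq_sqrt hx1'.le
  have hsy2 : sy ^ 2 = 1 - y ^ 2 := Real.sq_sqrt hy1'.le
  have hsD2 : sD ^ 2 = D := Real.sq_sqrt hD.le
  have hval : ⟪Q', R'⟫ = -((z - x * y) / (sx * sy)) := by
    rw [hQ'R', hwv, ht, hs, hnwD, hnvD, hb'def,
      Real.sqrt_div hD.le, Real.sqrt_div hD.le, ← hsxdef, ← hsydef, ← hsDdef]
    rw [← hsx2, ← hsy2, ← hsD2]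
    field_simp
  -- conclusion
  have hzb : |z| ≤ 1 := by
    have h := abs_real_inner_le_norm Q R
    rw [hQ, hR] at h
    simpa using h
  have hxb : |x| ≤ 1 := (sq_le_one_iff_abs_le_one x).mp hx1.le
  have hyb : |y| ≤ 1 := (sq_le_one_iff_abs_le_one y).mp hy1.le
  rw [abs_le] at hzb hxb hyb
  show Real.arccos ⟪Q', R'⟫ = π - angleFromSides (Real.arccos z) (Real.arccos x) (Real.arccos y)
  rw [angleFromSides, Real.cos_arccos hzb.1 hzb.2, Real.cos_arccos hxb.1 hxb.2,
    Real.cos_arccos hyb.1 hyb.2, Real.sin_arccos, Real.sin_arccos, ← hsxdef, ← hsydef,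
    hval, Real.arccos_neg]

lemma sphDist_comm (u v : EuclideanSpace ℝ (Fin 3)) : sphDist u v = sphDist v u := by
  unfold sphDist; rw [real_inner_comm]

lemma li3_swap (P Q R : EuclideanSpace ℝ (Fin 3))
    (h : LinearIndependent ℝ ![P, Q, R]) : LinearIndependent ℝ ![Q, P, R] := by
  rw [li3_iff] at h ⊢
  intro a b c h0
  have := h b a c (by rw [← h0]; module)
  exact ⟨this.2.1, this.1, this.2.2⟩

lemma li3_rot (P Q R : EuclideanSpace ℝ (Fin 3))
    (h : LinearIndependent ℝ ![P, Q, R]) : LinearIndependent ℝ ![R, P, Q] := by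
  rw [li3_iff] at h ⊢
  intro a b c h0
  have := h b c a (by rw [← h0]; module)
  exact ⟨this.2.2, this.1, this.2.1⟩

/-- The polar (supplementary) triangle: if a spherical triangle has sides
`a, b, c` and angles `A, B, C`, its polar triangle has sides
`π − A, π − B, π − C` and angles `π − a, π − b, π − c`. -/
theorem polar_triangle
    (P Q R P' Q' R' : EuclideanSpace ℝ (Fin 3))
    (hP : ‖P‖ = 1) (hQ : ‖Q‖ = 1) (hR : ‖R‖ = 1)
    (hP' : ‖P'‖ = 1) (hQ' : ‖Q'‖ = 1) (hR' : ‖R'‖ = 1)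
    (hindep : LinearIndependent ℝ ![P, Q, R])
    -- P' is the pole of the great circle through Q and R, on the same side as P
    (hP'Q : ⟪P', Q⟫ = 0) (hP'R : ⟪P', R⟫ = 0) (hP'P : 0 < ⟪P', P⟫)
    -- Q' is the pole of the great circle through P and R, on the same side as Q
    (hQ'P : ⟪Q', P⟫ = 0) (hQ'R : ⟪Q', R⟫ = 0) (hQ'Q : 0 < ⟪Q', Q⟫)
    -- R' is the pole of the great circle through P and Q, on the same side as R
    (hR'P : ⟪R', P⟫ = 0) (hR'Q : ⟪R', Q⟫ = 0) (hR'R : 0 < ⟪R', R⟫) :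
    -- sides of the polar triangle are the supplements of the angles
    sphDist Q' R' = π - angleFromSides (sphDist Q R) (sphDist P Q) (sphDist P R) ∧
    sphDist P' R' = π - angleFromSides (sphDist P R) (sphDist P Q) (sphDist Q R) ∧
    sphDist P' Q' = π - angleFromSides (sphDist P Q) (sphDist P R) (sphDist Q R) ∧
    -- angles of the polar triangle are the supplements of the sides
    angleFromSides (sphDist Q' R') (sphDist P' Q') (sphDist P' R') = π - sphDist Q R ∧
    angleFromSides (sphDist P' R') (sphDist P' Q') (sphDist Q' R') = π - sphDist P R ∧
    angleFromSides (sphDist P' Q') (sphDist P' R') (sphDist Q' R') = π - sphDist P Q := by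
  have hindep' : LinearIndependent ℝ ![P', Q', R'] := by
    rw [li3_iff]
    intro a b c h0
    have hA : a * ⟪P', P⟫ = 0 := by
      have h := congrArg (fun u : EuclideanSpace ℝ (Fin 3) => (⟪u, P⟫ : ℝ)) h0
      simp only [inner_add_left, real_inner_smul_left, hQ'P, hR'P, inner_zero_left,
        mul_zero, add_zero, zero_add] at h
      exact h
    have hB : b * ⟪Q', Q⟫ = 0 := by
      have h := congrArg (fun u : EuclideanSpace ℝ (Fin 3) => (⟪u, Q⟫ : ℝ)) h0
      simp only [inner_add_left, real_inner_smul_left, hP'Q, hR'Q, inner_zero_left,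
        mul_zero, add_zero, zero_add] at h
      exact h
    have hC : c * ⟪R', R⟫ = 0 := by
      have h := congrArg (fun u : EuclideanSpace ℝ (Fin 3) => (⟪u, R⟫ : ℝ)) h0
      simp only [inner_add_left, real_inner_smul_left, hP'R, hQ'R, inner_zero_left,
        mul_zero, add_zero, zero_add] at h
      exact h
    exact ⟨by
      rcases mul_eq_zero.mp hA with h | h
      · exact h
      · exact absurd h (ne_of_gt hP'P), by
      rcases mul_eq_zero.mp hB with h | h
      · exact h
      · exact absurd h (ne_of_gt hQ'Q), by
      rcases mul_eq_zero.mp hC with h | h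
      · exact h
      · exact absurd h (ne_of_gt hR'R)⟩
  have c1 := fun (u v : EuclideanSpace ℝ (Fin 3)) => real_inner_comm u v
  have hd1 := key P Q R Q' R' hP hQ hR hQ' hR' hindep hQ'P hQ'R hQ'Q hR'P hR'Q hR'R
  have hd2 := key Q P R P' R' hQ hP hR hP' hR' (li3_swap P Q R hindep)
    hP'Q hP'R hP'P hR'Q hR'P hR'R
  have hd3 := key R P Q P' Q' hR hP hQ hP' hQ' (li3_rot P Q R hindep)
    hP'R hP'Q hP'P hQ'R hQ'P hQ'Q
  have hd4 := key P' Q' R' Q R hP' hQ' hR' hQ hR hindep'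
    (by rw [real_inner_comm]; exact hP'Q) (by rw [real_inner_comm]; exact hR'Q) (by rw [real_inner_comm]; exact hQ'Q)
    (by rw [real_inner_comm]; exact hP'R) (by rw [real_inner_comm]; exact hQ'R) (by rw [real_inner_comm]; exact hR'R)
  have hd5 := key Q' P' R' P R hQ' hP' hR' hP hR (li3_swap P' Q' R' hindep')
    (by rw [real_inner_comm]; exact hQ'P) (by rw [real_inner_comm]; exact hR'P) (by rw [real_inner_comm]; exact hP'P)
    (by rw [real_inner_comm]; exact hQ'R) (by rw [real_inner_comm]; exact hP'R) (by rw [real_inner_comm]; exact hR'R)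
  have hd6 := key R' P' Q' P Q hR' hP' hQ' hP hQ (li3_rot P' Q' R' hindep')
    (by rw [real_inner_comm]; exact hR'P) (by rw [real_inner_comm]; exact hQ'P) (by rw [real_inner_comm]; exact hP'P)
    (by rw [real_inner_comm]; exact hR'Q) (by rw [real_inner_comm]; exact hP'Q) (by rw [real_inner_comm]; exact hQ'Q)
  rw [sphDist_comm Q P] at hd2
  rw [sphDist_comm R P, sphDist_comm R Q] at hd3
  rw [sphDist_comm Q' P'] at hd5
  rw [sphDist_comm R' P', sphDist_comm R' Q'] at hd6
  exact ⟨hd1, hd2, hd3, by rw [hd4]; ring, by rw [hd5]; ring, by rw [hd6]; ring⟩
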